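/- arXiv:math/0702303 — 3 statements merged into one kernel-verified Lean document; each statement's English description precedes it below -/
import Mathlib

section
/- Let n be a positive integer and λ₁,…,λₙ nonnegative reals with λⱼ ≤ 1 for all j. Then for any real numbers c_{ij} (1 ≤ i,j ≤ n), the quantity Σ_{i,j} c_{ij}²/(1+λᵢ²) − (1/2)Σ_{i,j} (λⱼ c_{ij} + λᵢ c_{ji})²/((1+λᵢ²)(1+λⱼ²)) is nonnegative; in fact it equals at least Σ_{i,j} c_{ij}²(1−λⱼ²)/((1+λᵢ²)(1+λⱼ²)). -/
open Finset

theorem stability_key_inequality (n : ℕ) (hn : 0 < n)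
    (lam : Fin n → ℝ) (hlam0 : ∀ j, 0 ≤ lam j) (hlam1 : ∀ j, lam j ≤ 1)
    (c : Fin n → Fin n → ℝ) :
    (∑ i, ∑ j, c i j ^ 2 * (1 - lam j ^ 2) /
        ((1 + lam i ^ 2) * (1 + lam j ^ 2))) ≤
      (∑ i, ∑ j, c i j ^ 2 / (1 + lam i ^ 2)) -
        (1 / 2) * ∑ i, ∑ j, (lam j * c i j + lam i * c j i) ^ 2 /
          ((1 + lam i ^ 2) * (1 + lam j ^ 2)) ∧
    0 ≤ (∑ i, ∑ j, c i j ^ 2 / (1 + lam i ^ 2)) -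
        (1 / 2) * ∑ i, ∑ j, (lam j * c i j + lam i * c j i) ^ 2 /
          ((1 + lam i ^ 2) * (1 + lam j ^ 2)) := by
  have h1 : ∀ i : Fin n, (1 + lam i ^ 2) ≠ 0 := by
    intro i; positivity
  -- the antisymmetric sum vanishes
  have hT : (∑ i, ∑ j, (2 * lam j ^ 2 * c i j ^ 2 - 2 * lam i ^ 2 * c j i ^ 2) /
      ((1 + lam i ^ 2) * (1 + lam j ^ 2))) = 0 := by
    have h := Finset.sum_comm (s := (univ : Finset (Fin n))) (t := (univ : Finset (Fin n)))
      (f := fun i j => (2 * lam j ^ 2 * c i j ^ 2 - 2 * lam i ^ 2 * c j i ^ 2) /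
        ((1 + lam i ^ 2) * (1 + lam j ^ 2)))
    have h2 : (∑ i, ∑ j, (2 * lam j ^ 2 * c i j ^ 2 - 2 * lam i ^ 2 * c j i ^ 2) /
        ((1 + lam i ^ 2) * (1 + lam j ^ 2))) =
        -(∑ i, ∑ j, (2 * lam j ^ 2 * c i j ^ 2 - 2 * lam i ^ 2 * c j i ^ 2) /
        ((1 + lam i ^ 2) * (1 + lam j ^ 2))) := by
      nth_rewrite 1 [h]
      rw [← Finset.sum_neg_distrib]
      refine Finset.sum_congr rfl fun j _ => ?_
      rw [← Finset.sum_neg_distrib]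
      refine Finset.sum_congr rfl fun i _ => ?_
      rw [← neg_div]
      rw [mul_comm (1 + lam i ^ 2)]
      ring_nf
    linarith
  have hS : 0 ≤ ∑ i, ∑ j, (lam j * c i j - lam i * c j i) ^ 2 /
      ((1 + lam i ^ 2) * (1 + lam j ^ 2)) := by
    refine Finset.sum_nonneg fun i _ => Finset.sum_nonneg fun j _ => ?_
    positivity
  have hL : 0 ≤ ∑ i, ∑ j, c i j ^ 2 * (1 - lam j ^ 2) /
      ((1 + lam i ^ 2) * (1 + lam j ^ 2)) := by
    refine Finset.sum_nonneg fun i _ => Finset.sum_nonneg fun j _ => ?_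
    have h2 : 0 ≤ 1 - lam j ^ 2 := by nlinarith [hlam0 j, hlam1 j]
    have h3 : 0 < (1 + lam i ^ 2) * (1 + lam j ^ 2) := by positivity
    positivity
  -- main identity
  have hid : (∑ i, ∑ j, c i j ^ 2 / (1 + lam i ^ 2)) -
        (1 / 2) * (∑ i, ∑ j, (lam j * c i j + lam i * c j i) ^ 2 /
          ((1 + lam i ^ 2) * (1 + lam j ^ 2))) =
      (∑ i, ∑ j, c i j ^ 2 * (1 - lam j ^ 2) /
        ((1 + lam i ^ 2) * (1 + lam j ^ 2))) +
      (1 / 2) * (∑ i, ∑ j, (lam j * c i j - lam i * c j i) ^ 2 /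
        ((1 + lam i ^ 2) * (1 + lam j ^ 2))) +
      (1 / 2) * (∑ i, ∑ j, (2 * lam j ^ 2 * c i j ^ 2 - 2 * lam i ^ 2 * c j i ^ 2) /
        ((1 + lam i ^ 2) * (1 + lam j ^ 2))) := by
    simp only [Finset.mul_sum, ← Finset.sum_sub_distrib, ← Finset.sum_add_distrib]
    refine Finset.sum_congr rfl fun i _ => Finset.sum_congr rfl fun j _ => ?_
    field_simp
    ring
  rw [hT, mul_zero, add_zero] at hid
  constructor
  · linarith
  · linarith
end

section
/- Let p > 1 be an integer, let S ⊆ {1,…,n} be a set of indices of cardinality at most p, and let λᵢ > 0 for i ∈ S with λᵢλⱼ ≤ 1/(p−1) for all i ≠ j in S. Then for any reals dᵢ (i ∈ S): Σ_{i∈S} dᵢ²/(1+λᵢ²)² + Σ_{i≠j∈S} λᵢλⱼ dᵢ dⱼ/((1+λᵢ²)(1+λⱼ²)) ≥ (1/(p−1)) Σ_{i<j∈S} ( |dᵢ|/(1+λᵢ²) − |dⱼ|/(1+λⱼ²) )². -/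
open Finset

theorem two_jacobian_diagonal_estimate (n p : ℕ) (hp : 1 < p)
    (S : Finset (Fin n)) (hS : S.card ≤ p)
    (lam : Fin n → ℝ) (hlam : ∀ i ∈ S, 0 < lam i)
    (hprod : ∀ i ∈ S, ∀ j ∈ S, i ≠ j → lam i * lam j ≤ 1 / (p - 1 : ℝ))
    (d : Fin n → ℝ) :
    (1 / (p - 1 : ℝ)) *
        ∑ q ∈ (S ×ˢ S).filter (fun q => q.1 < q.2),
          (|d q.1| / (1 + lam q.1 ^ 2) - |d q.2| / (1 + lam q.2 ^ 2)) ^ 2 ≤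
      (∑ i ∈ S, d i ^ 2 / (1 + lam i ^ 2) ^ 2) +
        ∑ q ∈ S.offDiag, lam q.1 * lam q.2 * d q.1 * d q.2 /
          ((1 + lam q.1 ^ 2) * (1 + lam q.2 ^ 2)) := by
  have hp1 : (0:ℝ) < (p:ℝ) - 1 := by
    have : (1:ℝ) < (p:ℝ) := by exact_mod_cast hp
    linarith
  set c : ℝ := 1 / ((p:ℝ) - 1) with hc
  have hc0 : 0 < c := by positivity
  set a : Fin n → ℝ := fun i => |d i| / (1 + lam i ^ 2) with ha
  have hpos : ∀ i, (0:ℝ) < 1 + lam i ^ 2 := fun i => by positivity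
  have ha0 : ∀ i, 0 ≤ a i := fun i => div_nonneg (abs_nonneg _) (hpos i).le
  set A : ℝ := ∑ i ∈ S, a i ^ 2 with hA
  set B : ℝ := ∑ i ∈ S, a i with hB
  have hA0 : 0 ≤ A := Finset.sum_nonneg fun i _ => sq_nonneg _
  -- diagonal rewrite
  have hdiag : ∑ i ∈ S, d i ^ 2 / (1 + lam i ^ 2) ^ 2 = A := by
    refine Finset.sum_congr rfl fun i _ => ?_
    rw [ha]; simp only []
    rw [div_pow, sq_abs]
  -- cross bound termwise
  have hcross : ∀ q ∈ S.offDiag,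
      -(c * (a q.1 * a q.2)) ≤ lam q.1 * lam q.2 * d q.1 * d q.2 /
        ((1 + lam q.1 ^ 2) * (1 + lam q.2 ^ 2)) := by
    intro q hq
    obtain ⟨h1, h2, hne⟩ := Finset.mem_offDiag.mp hq
    have hl1 := hlam _ h1
    have hl2 := hlam _ h2
    have hb := hprod _ h1 _ h2 hne
    have habs : |lam q.1 * lam q.2 * d q.1 * d q.2 /
        ((1 + lam q.1 ^ 2) * (1 + lam q.2 ^ 2))| ≤ c * (a q.1 * a q.2) := by
      have heq : |lam q.1 * lam q.2 * d q.1 * d q.2 /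
          ((1 + lam q.1 ^ 2) * (1 + lam q.2 ^ 2))|
          = (lam q.1 * lam q.2) * (a q.1 * a q.2) := by
        rw [abs_div, abs_mul, abs_mul, abs_mul, abs_of_pos hl1, abs_of_pos hl2,
          abs_of_pos (by positivity : (0:ℝ) < (1 + lam q.1 ^ 2) * (1 + lam q.2 ^ 2))]
        rw [ha]; field_simp
      rw [heq]
      exact mul_le_mul_of_nonneg_right hb (mul_nonneg (ha0 _) (ha0 _))
    linarith [neg_abs_le (lam q.1 * lam q.2 * d q.1 * d q.2 /
      ((1 + lam q.1 ^ 2) * (1 + lam q.2 ^ 2))), habs]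
  have hcsum : -(c * ∑ q ∈ S.offDiag, a q.1 * a q.2) ≤
      ∑ q ∈ S.offDiag, lam q.1 * lam q.2 * d q.1 * d q.2 /
        ((1 + lam q.1 ^ 2) * (1 + lam q.2 ^ 2)) := by
    rw [Finset.mul_sum, ← Finset.sum_neg_distrib]
    exact Finset.sum_le_sum hcross
  -- sums over S ×ˢ S
  have hprod1 : ∑ q ∈ S ×ˢ S, (a q.1 - a q.2) ^ 2
      = 2 * (S.card : ℝ) * A - 2 * B ^ 2 := by
    rw [Finset.sum_product]
    have hin : ∀ i ∈ S, ∑ j ∈ S, (a i - a j) ^ 2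
        = (S.card : ℝ) * a i ^ 2 - 2 * a i * B + A := by
      intro i _
      have : ∀ j, (a i - a j) ^ 2 = a i ^ 2 - 2 * a i * a j + a j ^ 2 := fun j => by ring
      simp_rw [this]
      rw [Finset.sum_add_distrib, Finset.sum_sub_distrib, Finset.sum_const,
        nsmul_eq_mul, ← Finset.mul_sum, ← hB, ← hA]
    rw [Finset.sum_congr rfl hin, Finset.sum_add_distrib, Finset.sum_sub_distrib,
      Finset.sum_const, nsmul_eq_mul, ← Finset.mul_sum, ← hA, ← Finset.sum_mul,
      ← Finset.mul_sum, ← hB]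
    ring
  have hprod2 : ∑ q ∈ S ×ˢ S, a q.1 * a q.2 = B ^ 2 := by
    rw [Finset.sum_product]
    have hin : ∀ i ∈ S, ∑ j ∈ S, a i * a j = a i * B := fun i _ => by
      rw [← Finset.mul_sum]
    rw [Finset.sum_congr rfl hin, ← Finset.sum_mul, ← hB]; ring
  -- split S ×ˢ S into diag and offDiag
  have hsplitDO : ∀ f : Fin n × Fin n → ℝ,
      ∑ q ∈ S ×ˢ S, f q = ∑ q ∈ S.diag, f q + ∑ q ∈ S.offDiag, f q := by
    intro f
    rw [← Finset.sum_union (Finset.disjoint_diag_offDiag S), Finset.diag_union_offDiag]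
  have hdiagsum1 : ∑ q ∈ S.diag, (a q.1 - a q.2) ^ 2 = 0 := by
    rw [Finset.sum_diag]; simp
  have hdiagsum2 : ∑ q ∈ S.diag, a q.1 * a q.2 = A := by
    rw [Finset.sum_diag]; simp [hA, sq]
  have hoff1 : ∑ q ∈ S.offDiag, (a q.1 - a q.2) ^ 2 = 2 * (S.card : ℝ) * A - 2 * B ^ 2 := by
    have := hsplitDO (fun q => (a q.1 - a q.2) ^ 2)
    rw [hprod1, hdiagsum1] at this; linarith
  have hoff2 : ∑ q ∈ S.offDiag, a q.1 * a q.2 = B ^ 2 - A := by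
    have := hsplitDO (fun q => a q.1 * a q.2)
    rw [hprod2, hdiagsum2] at this; linarith
  -- symmetry: offDiag sum of squares = 2 * filter sum
  have hsym : ∑ q ∈ S.offDiag, (a q.1 - a q.2) ^ 2
      = 2 * ∑ q ∈ (S ×ˢ S).filter (fun q => q.1 < q.2), (a q.1 - a q.2) ^ 2 := by
    have hcover : S.offDiag = (S ×ˢ S).filter (fun q => q.1 < q.2)
        ∪ (S ×ˢ S).filter (fun q => q.2 < q.1) := by
      ext q
      simp only [Finset.mem_offDiag, Finset.mem_union, Finset.mem_filter,
        Finset.mem_product]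
      constructor
      · rintro ⟨h1, h2, h3⟩
        rcases lt_or_gt_of_ne h3 with h | h
        · exact Or.inl ⟨⟨h1, h2⟩, h⟩
        · exact Or.inr ⟨⟨h1, h2⟩, h⟩
      · rintro (⟨⟨h1, h2⟩, h⟩ | ⟨⟨h1, h2⟩, h⟩)
        · exact ⟨h1, h2, ne_of_lt h⟩
        · exact ⟨h1, h2, (ne_of_lt h).symm⟩
    have hdisj : Disjoint ((S ×ˢ S).filter (fun q => q.1 < q.2))
        ((S ×ˢ S).filter (fun q => q.2 < q.1)) := by
      rw [Finset.disjoint_left]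
      intro q hq hq'
      simp only [Finset.mem_filter] at hq hq'
      exact absurd hq'.2 (not_lt_of_gt hq.2)
    have hswap : ∑ q ∈ (S ×ˢ S).filter (fun q => q.2 < q.1), (a q.1 - a q.2) ^ 2
        = ∑ q ∈ (S ×ˢ S).filter (fun q => q.1 < q.2), (a q.1 - a q.2) ^ 2 := by
      refine Finset.sum_bij' (fun q _ => q.swap) (fun q _ => q.swap) ?_ ?_ ?_ ?_ ?_
      · intro q hq
        simp only [Finset.mem_filter, Finset.mem_product] at hq ⊢
        exact ⟨⟨hq.1.2, hq.1.1⟩, hq.2⟩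
      · intro q hq
        simp only [Finset.mem_filter, Finset.mem_product] at hq ⊢
        exact ⟨⟨hq.1.2, hq.1.1⟩, hq.2⟩
      · intro q _; simp
      · intro q _; simp
      · intro q _; simp [Prod.fst_swap, Prod.snd_swap]; ring
    rw [hcover, Finset.sum_union hdisj, hswap]; ring
  -- finish
  have hmle : (S.card : ℝ) ≤ (p : ℝ) := by exact_mod_cast hS
  have hkey : c * ((S.card : ℝ) - 1) * A ≤ A := by
    have h1 : c * ((S.card : ℝ) - 1) ≤ 1 := by
      rw [hc, div_mul_eq_mul_div, div_le_one hp1]; linarith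
    nlinarith
  rw [hdiag]
  have hF : c * ∑ q ∈ (S ×ˢ S).filter (fun q => q.1 < q.2),
      (|d q.1| / (1 + lam q.1 ^ 2) - |d q.2| / (1 + lam q.2 ^ 2)) ^ 2
      = c * ∑ q ∈ (S ×ˢ S).filter (fun q => q.1 < q.2), (a q.1 - a q.2) ^ 2 := rfl
  rw [hF]
  nlinarith [hcsum, hoff1, hoff2, hsym, hkey]
end

section
/- Let p > 1 and suppose λ₁,…,λₙ ≥ 0 with at most p of them nonzero and λᵢλⱼ ≤ 1/(p−1) for all i ≠ j. Then for any real numbers c_{ij}: Σ_{i,j} c_{ij}²/(1+λᵢ²) + (Σ_i λᵢ c_{ii}/(1+λᵢ²))² − (1/2)Σ_{i,j} (λⱼ c_{ij} + λᵢ c_{ji})²/((1+λᵢ²)(1+λⱼ²)) ≥ 0. -/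
open Finset

private lemma sum_split_diag {n : ℕ} (f : Fin n → Fin n → ℝ) :
    ∑ i, ∑ j, f i j
      = ∑ i, f i i + ∑ i, ∑ j, (if i = j then 0 else f i j) := by
  have h : ∀ i : Fin n, ∑ j, f i j
      = f i i + ∑ j, (if i = j then 0 else f i j) := by
    intro i
    have h1 : ∑ j, f i j
        = ∑ j, ((if i = j then f i j else 0) + (if i = j then 0 else f i j)) := by
      apply Finset.sum_congr rfl
      intro j _
      by_cases hij : i = j <;> simp [hij]
    rw [h1, Finset.sum_add_distrib, Finset.sum_ite_eq]
    simp
  rw [Finset.sum_congr rfl (fun i _ => h i), Finset.sum_add_distrib]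

private lemma aux_diag {n p : ℕ} (hp : 1 < p)
    (lam : Fin n → ℝ) (hlam0 : ∀ i, 0 ≤ lam i)
    (hrank : (Finset.univ.filter fun i => lam i ≠ 0).card ≤ p)
    (hprod : ∀ i j, i ≠ j → lam i * lam j ≤ 1 / (p - 1 : ℝ))
    (t : Fin n → ℝ) :
    0 ≤ ∑ i, (1 - lam i ^ 2) * t i ^ 2 + (∑ i, lam i * t i) ^ 2 := by
  have hpR : (1 : ℝ) ≤ (p : ℝ) - 1 := by
    have : (2 : ℝ) ≤ (p : ℝ) := by exact_mod_cast hp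
    linarith
  have hpRpos : (0 : ℝ) < (p : ℝ) - 1 := by linarith
  set S : Finset (Fin n) := Finset.univ.filter (fun i => lam i ≠ 0) with hS
  set u : Fin n → ℝ := fun i => if lam i ≠ 0 then |t i| else 0 with hu
  -- expand the square
  have hsq : (∑ i, lam i * t i) ^ 2 = ∑ i, ∑ j, (lam i * t i) * (lam j * t j) := by
    rw [sq, Finset.sum_mul_sum]
  have hsplit := sum_split_diag (fun i j => (lam i * t i) * (lam j * t j))
  -- off-diagonal bound termwise
  have hterm : ∀ i j : Fin n,
      (if i = j then 0 else -(1 / ((p : ℝ) - 1)) * (u i * u j))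
        ≤ (if i = j then 0 else (lam i * t i) * (lam j * t j)) := by
    intro i j
    by_cases hij : i = j
    · simp [hij]
    · simp only [hij, if_false]
      by_cases hi : lam i = 0
      · simp [hu, hi]
      by_cases hj : lam j = 0
      · simp [hu, hj]
      have h1 : u i = |t i| := by simp [hu, hi]
      have h2 : u j = |t j| := by simp [hu, hj]
      rw [h1, h2]
      have hll : 0 ≤ lam i * lam j := mul_nonneg (hlam0 i) (hlam0 j)
      have hle : lam i * lam j ≤ 1 / ((p : ℝ) - 1) := hprod i j hij
      have habs : -(|t i| * |t j|) ≤ t i * t j := by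
        have := neg_abs_le (t i * t j)
        rwa [abs_mul] at this
      have h3 : (lam i * t i) * (lam j * t j) = (lam i * lam j) * (t i * t j) := by ring
      rw [h3]
      have k1 : (0:ℝ) ≤ |t i| * |t j| := mul_nonneg (abs_nonneg _) (abs_nonneg _)
      have k2 : (lam i * lam j) * (-(|t i| * |t j|)) ≤ (lam i * lam j) * (t i * t j) :=
        mul_le_mul_of_nonneg_left habs hll
      have k3 : (lam i * lam j) * (|t i| * |t j|) ≤ (1 / ((p : ℝ) - 1)) * (|t i| * |t j|) :=
        mul_le_mul_of_nonneg_right hle k1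
      nlinarith [k2, k3]
  have hoff : ∑ i, ∑ j, (if i = j then 0 else -(1 / ((p : ℝ) - 1)) * (u i * u j))
      ≤ ∑ i, ∑ j, (if i = j then 0 else (lam i * t i) * (lam j * t j)) :=
    Finset.sum_le_sum (fun i _ => Finset.sum_le_sum (fun j _ => hterm i j))
  -- compute the u-sum
  have huu : ∑ i, ∑ j, (if i = j then 0 else -(1 / ((p : ℝ) - 1)) * (u i * u j))
      = -(1 / ((p : ℝ) - 1)) * ((∑ i, u i) ^ 2 - ∑ i, u i * u i) := by
    have h1 : ∀ i j : Fin n, (if i = j then 0 else -(1 / ((p : ℝ) - 1)) * (u i * u j))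
        = -(1 / ((p : ℝ) - 1)) * (if i = j then 0 else u i * u j) := by
      intro i j; by_cases hij : i = j <;> simp [hij]
    calc ∑ i, ∑ j, (if i = j then 0 else -(1 / ((p : ℝ) - 1)) * (u i * u j))
        = ∑ i, ∑ j, -(1 / ((p : ℝ) - 1)) * (if i = j then 0 else u i * u j) := by
          exact Finset.sum_congr rfl fun i _ => Finset.sum_congr rfl fun j _ => h1 i j
      _ = -(1 / ((p : ℝ) - 1)) * ∑ i, ∑ j, (if i = j then 0 else u i * u j) := by
          rw [Finset.mul_sum]
          exact Finset.sum_congr rfl fun i _ => (Finset.mul_sum _ _ _).symm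
      _ = -(1 / ((p : ℝ) - 1)) * ((∑ i, u i) ^ 2 - ∑ i, u i * u i) := by
          have := sum_split_diag (fun i j => u i * u j)
          rw [sq, Finset.sum_mul_sum]
          congr 1
          linarith [this]
  -- Cauchy-Schwarz type bound
  have hunn : ∀ i, 0 ≤ u i := by
    intro i
    simp only [hu]
    split <;> simp [abs_nonneg]
  have hsumu : ∑ i, u i = ∑ i ∈ S, |t i| := by
    rw [hS, Finset.sum_filter]
  have hsumuu : ∑ i, u i * u i = ∑ i ∈ S, |t i| * |t i| := by
    rw [hS, Finset.sum_filter]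
    apply Finset.sum_congr rfl
    intro i _
    by_cases hi : lam i ≠ 0 <;> simp [hu, hi]
  have hcs : (∑ i, u i) ^ 2 ≤ (p : ℝ) * ∑ i, u i * u i := by
    rw [hsumu, hsumuu]
    have h1 : (∑ i ∈ S, |t i|) ^ 2 ≤ (∑ i ∈ S, (1:ℝ) ^ 2) * ∑ i ∈ S, |t i| ^ 2 := by
      have := Finset.sum_mul_sq_le_sq_mul_sq S (fun _ => (1:ℝ)) (fun i => |t i|)
      simpa using this
    have h2 : (∑ i ∈ S, (1:ℝ) ^ 2) = (S.card : ℝ) := by simp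
    have h3 : (S.card : ℝ) ≤ (p : ℝ) := by exact_mod_cast hrank
    have h4 : 0 ≤ ∑ i ∈ S, |t i| ^ 2 := Finset.sum_nonneg fun i _ => sq_nonneg _
    calc (∑ i ∈ S, |t i|) ^ 2 ≤ (S.card : ℝ) * ∑ i ∈ S, |t i| ^ 2 := by rw [← h2]; exact h1
      _ ≤ (p : ℝ) * ∑ i ∈ S, |t i| ^ 2 := by nlinarith
      _ = (p : ℝ) * ∑ i ∈ S, |t i| * |t i| := by
          congr 1; exact Finset.sum_congr rfl fun i _ => sq (|t i|) ▸ (sq_abs (t i) ▸ by ring_nf)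
  have huut : ∑ i, u i * u i ≤ ∑ i, t i ^ 2 := by
    apply Finset.sum_le_sum
    intro i _
    by_cases hi : lam i ≠ 0
    · have h1 : u i = |t i| := by simp [hu, hi]
      rw [h1, abs_mul_abs_self]
      exact le_of_eq (by ring)
    · have h1 : u i = 0 := by simp [hu, hi]
      rw [h1, mul_zero]
      positivity
  -- put it together
  have hdiag : ∑ i, ((lam i * t i) * (lam i * t i)) = ∑ i, lam i ^ 2 * t i ^ 2 := by
    exact Finset.sum_congr rfl fun i _ => by ring
  have he : ∑ i, (1 - lam i ^ 2) * t i ^ 2 + ∑ i, lam i ^ 2 * t i ^ 2 = ∑ i, t i ^ 2 := by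
    rw [← Finset.sum_add_distrib]
    exact Finset.sum_congr rfl fun i _ => by ring
  have key : ∑ i, (1 - lam i ^ 2) * t i ^ 2 + (∑ i, lam i * t i) ^ 2
      = ∑ i, t i ^ 2 + ∑ i, ∑ j, (if i = j then 0 else (lam i * t i) * (lam j * t j)) := by
    rw [hsq, hsplit, hdiag]
    linarith [he]
  rw [key]
  have hb : -(1 / ((p : ℝ) - 1)) * ((∑ i, u i) ^ 2 - ∑ i, u i * u i)
      ≥ -(∑ i, t i ^ 2) := by
    have h1 : (∑ i, u i) ^ 2 - ∑ i, u i * u i ≤ ((p:ℝ) - 1) * ∑ i, u i * u i := by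
      nlinarith
    have h2 : ((p:ℝ) - 1) * ∑ i, u i * u i ≤ ((p:ℝ) - 1) * ∑ i, t i ^ 2 := by
      nlinarith
    have h3 : 0 < 1 / ((p:ℝ) - 1) := by positivity
    have h4 : (∑ i, u i) ^ 2 - ∑ i, u i * u i ≤ ((p:ℝ) - 1) * ∑ i, t i ^ 2 := le_trans h1 h2
    have h5 : (1 / ((p:ℝ) - 1)) * (((p:ℝ) - 1) * ∑ i, t i ^ 2) = ∑ i, t i ^ 2 := by
      field_simp
    nlinarith
  linarith [hoff, huu ▸ hb]

theorem second_variation_two_jacobian_bound (n p : ℕ) (hp : 1 < p)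
    (lam : Fin n → ℝ) (hlam0 : ∀ i, 0 ≤ lam i)
    (hrank : (Finset.univ.filter fun i => lam i ≠ 0).card ≤ p)
    (hprod : ∀ i j, i ≠ j → lam i * lam j ≤ 1 / (p - 1 : ℝ))
    (c : Fin n → Fin n → ℝ) :
    0 ≤ (∑ i, ∑ j, c i j ^ 2 / (1 + lam i ^ 2)) +
        (∑ i, lam i * c i i / (1 + lam i ^ 2)) ^ 2 -
        (1 / 2) * ∑ i, ∑ j, (lam j * c i j + lam i * c j i) ^ 2 /
          ((1 + lam i ^ 2) * (1 + lam j ^ 2)) := by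
  have hd : ∀ i, (0:ℝ) < 1 + lam i ^ 2 := fun i => by positivity
  have hdne : ∀ i, (1 + lam i ^ 2 : ℝ) ≠ 0 := fun i => (hd i).ne'
  set D : Fin n → ℝ := fun i => 1 + lam i ^ 2 with hD
  -- the main term and the antisymmetric correction
  set M : Fin n → Fin n → ℝ :=
    fun i j => (c i j ^ 2 - lam i * lam j * (c i j * c j i)) / (D i * D j) with hM
  set H : Fin n → Fin n → ℝ :=
    fun i j => (1/2) * (lam j ^ 2 * c i j ^ 2) / (D i * D j) with hH
  have hiden : ∀ i j, c i j ^ 2 / D i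
      - (1/2) * ((lam j * c i j + lam i * c j i) ^ 2 / (D i * D j))
      = M i j + (H i j - H j i) := by
    intro i j
    simp only [hM, hH, hD]
    field_simp
    ring
  have hsum_iden : (∑ i, ∑ j, c i j ^ 2 / D i)
      - (1/2) * ∑ i, ∑ j, (lam j * c i j + lam i * c j i) ^ 2 / (D i * D j)
      = ∑ i, ∑ j, M i j := by
    have hHsum : ∑ i, ∑ j, (H i j - H j i) = 0 := by
      have h1 : ∑ i, ∑ j, (H i j - H j i)
          = (∑ i, ∑ j, H i j) - ∑ i, ∑ j, H j i := by
        rw [← Finset.sum_sub_distrib]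
        exact Finset.sum_congr rfl fun i _ => Finset.sum_sub_distrib _ _
      rw [h1, Finset.sum_comm (f := fun i j => H j i)]
      ring
    have h2 : ∑ i, ∑ j, (c i j ^ 2 / D i
        - (1/2) * ((lam j * c i j + lam i * c j i) ^ 2 / (D i * D j)))
        = ∑ i, ∑ j, (M i j + (H i j - H j i)) :=
      Finset.sum_congr rfl fun i _ => Finset.sum_congr rfl fun j _ => hiden i j
    have h3 : ∑ i, ∑ j, (c i j ^ 2 / D i
        - (1/2) * ((lam j * c i j + lam i * c j i) ^ 2 / (D i * D j)))
        = (∑ i, ∑ j, c i j ^ 2 / D i)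
          - (1/2) * ∑ i, ∑ j, (lam j * c i j + lam i * c j i) ^ 2 / (D i * D j) := by
      rw [Finset.mul_sum]
      rw [← Finset.sum_sub_distrib]
      apply Finset.sum_congr rfl
      intro i _
      rw [Finset.mul_sum, ← Finset.sum_sub_distrib]
    have h4 : ∑ i, ∑ j, (M i j + (H i j - H j i))
        = (∑ i, ∑ j, M i j) + ∑ i, ∑ j, (H i j - H j i) := by
      rw [← Finset.sum_add_distrib]
      exact Finset.sum_congr rfl fun i _ => Finset.sum_add_distrib
    rw [← h3, h2, h4, hHsum, add_zero]
  -- split M into diagonal and off-diagonal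
  have hsplit := sum_split_diag M
  -- diagonal part
  set t : Fin n → ℝ := fun i => c i i / D i with ht
  have hdiag : ∀ i, M i i = (1 - lam i ^ 2) * t i ^ 2 := by
    intro i
    simp only [hM, ht, hD]
    field_simp
  have hlc : ∀ i, lam i * c i i / (1 + lam i ^ 2) = lam i * t i := by
    intro i
    simp only [ht, hD]
    ring
  -- off-diagonal part nonneg
  have hpR : (1 : ℝ) ≤ (p : ℝ) - 1 := by
    have : (2 : ℝ) ≤ (p : ℝ) := by exact_mod_cast hp
    linarith
  set A : Fin n → Fin n → ℝ := fun i j => c i j ^ 2 / (D i * D j) with hA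
  have hoffterm : ∀ i j : Fin n,
      (if i = j then 0 else (A i j - A j i) / 2) ≤ (if i = j then 0 else M i j) := by
    intro i j
    by_cases hij : i = j
    · simp [hij]
    · simp only [hij, if_false]
      have hDD : (0:ℝ) < D i * D j := mul_pos (hd i) (hd j)
      have hll : 0 ≤ lam i * lam j := mul_nonneg (hlam0 i) (hlam0 j)
      have hle1 : lam i * lam j ≤ 1 := le_trans (hprod i j hij) (by
        rw [div_le_one (by linarith : (0:ℝ) < (p:ℝ) - 1)]; linarith)
      have hcc : lam i * lam j * (c i j * c j i) ≤ (c i j ^ 2 + c j i ^ 2) / 2 := by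
        have h1 : c i j * c j i ≤ |c i j * c j i| := le_abs_self _
        have h2 : |c i j * c j i| ≤ (c i j ^ 2 + c j i ^ 2) / 2 := by
          rw [abs_mul]
          nlinarith [sq_nonneg (|c i j| - |c j i|), sq_abs (c i j), sq_abs (c j i), abs_nonneg (c i j), abs_nonneg (c j i)]
        nlinarith [abs_nonneg (c i j * c j i)]
      have key : M i j - (A i j - A j i) / 2
          = ((c i j ^ 2 + c j i ^ 2) / 2 - lam i * lam j * (c i j * c j i)) / (D i * D j) := by
        simp only [hM, hA, hD]
        field_simp
        ring
      have h0 : 0 ≤ ((c i j ^ 2 + c j i ^ 2) / 2 - lam i * lam j * (c i j * c j i)) / (D i * D j) :=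
        div_nonneg (by linarith) hDD.le
      linarith [key ▸ h0]
  have hoffsum : 0 ≤ ∑ i, ∑ j, (if i = j then 0 else M i j) := by
    have h1 : ∑ i, ∑ j, (if i = j then 0 else (A i j - A j i) / 2)
        ≤ ∑ i, ∑ j, (if i = j then 0 else M i j) :=
      Finset.sum_le_sum fun i _ => Finset.sum_le_sum fun j _ => hoffterm i j
    have hzero : ∑ i, ∑ j, (if i = j then (0:ℝ) else (A i j - A j i) / 2) = 0 := by
      set G : Fin n → Fin n → ℝ := fun i j => if i = j then (0:ℝ) else (A i j - A j i) / 2 with hG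
      have hanti : ∀ i j, G j i = -G i j := by
        intro i j
        by_cases h : i = j
        · simp [hG, h]
        · have h' : ¬ (j = i) := fun hh => h hh.symm
          simp only [hG, h, h', if_false]
          ring
      have h2 : ∑ i, ∑ j, G i j = ∑ i, ∑ j, G j i := Finset.sum_comm
      have h3 : ∑ i, ∑ j, G j i = -∑ i, ∑ j, G i j := by
        rw [← Finset.sum_neg_distrib]
        apply Finset.sum_congr rfl
        intro i _
        rw [← Finset.sum_neg_distrib]
        exact Finset.sum_congr rfl fun j _ => hanti i j
      have : ∑ i, ∑ j, G i j = 0 := by linarith [h2, h3]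
      exact this
    linarith
  -- assemble
  have hdiagsum : ∑ i, M i i = ∑ i, (1 - lam i ^ 2) * t i ^ 2 :=
    Finset.sum_congr rfl fun i _ => hdiag i
  have hDiagIneq : 0 ≤ ∑ i, (1 - lam i ^ 2) * t i ^ 2 + (∑ i, lam i * t i) ^ 2 :=
    aux_diag hp lam hlam0 hrank hprod t
  have hsq : (∑ i, lam i * c i i / (1 + lam i ^ 2)) ^ 2 = (∑ i, lam i * t i) ^ 2 := by
    congr 1
    exact Finset.sum_congr rfl fun i _ => hlc i
  have final : 0 ≤ (∑ i, ∑ j, c i j ^ 2 / D i) +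
      (∑ i, lam i * c i i / (1 + lam i ^ 2)) ^ 2 -
      (1 / 2) * ∑ i, ∑ j, (lam j * c i j + lam i * c j i) ^ 2 / (D i * D j) := by
    rw [hsq]
    have := hsplit
    linarith [hsum_iden, hoffsum, hdiagsum ▸ hDiagIneq, hsplit]
  exact final
end
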